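/- Let α_{i₁},…,α_{i_k} ∈ F be pairwise distinct, g(x) = ∏_{j=1}^k(x - α_{i_j}) = ∑_{j=0}^k c_j x^{k-j} (so c₀ = 1). Let e_s = S_s(α_{i₁},…,α_{i_k}) denote the complete homogeneous symmetric polynomials. Then for 0 ≤ t and 0 ≤ r ≤ k-1, the coefficient f_{t,r} of x^r in the remainder of x^{k+t} modulo g(x) is f_{t,r} = -∑_{i=0}^{t} c_{k-r+i} e_{t-i} (with the convention c_j = 0 for j > k or j < 0). -/

import Mathlib

/-- The complete homogeneous symmetric polynomial of degree `t` evaluated at `x`. -/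
def hsym {F : Type*} [CommRing F] (n : ℕ) (x : Fin n → F) (t : ℕ) : F :=
  ∑ f ∈ Finset.Nat.antidiagonalTuple n t, ∏ i, x i ^ f i

lemma hsym_zero {F : Type*} [CommRing F] (n : ℕ) (x : Fin n → F) : hsym n x 0 = 1 := by
  simp [hsym, Finset.Nat.antidiagonalTuple_zero_right]

lemma hsym_zero_vars {F : Type*} [CommRing F] (x : Fin 0 → F) (t : ℕ) :
    hsym 0 x t = if t = 0 then 1 else 0 := by
  cases t with
  | zero => simp [hsym_zero]
  | succ t => simp [hsym, Finset.Nat.antidiagonalTuple_zero_succ]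

lemma hsym_succ {F : Type*} [CommRing F] (n : ℕ) (x : Fin (n+1) → F) (t : ℕ) :
    hsym (n+1) x t = ∑ p ∈ Finset.HasAntidiagonal.antidiagonal t,
      hsym n (x ∘ Fin.castSucc) p.1 * x (Fin.last n) ^ p.2 := by
  unfold hsym
  simp_rw [Finset.sum_mul]
  rw [Finset.sum_sigma']
  refine Finset.sum_nbij'
    (fun (f : Fin (n+1) → ℕ) => (⟨(∑ i, f (Fin.castSucc i), f (Fin.last n)), f ∘ Fin.castSucc⟩ : (_ : ℕ × ℕ) × (Fin n → ℕ)))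
    (fun (a : (_ : ℕ × ℕ) × (Fin n → ℕ)) => (Fin.snoc a.2 a.1.2 : Fin (n+1) → ℕ))
    ?_ ?_ ?_ ?_ ?_
  · intro f h
    simp only [Finset.Nat.mem_antidiagonalTuple] at h
    simp only [Finset.mem_sigma, Finset.HasAntidiagonal.mem_antidiagonal,
      Finset.Nat.mem_antidiagonalTuple]
    exact ⟨by rw [← h, Fin.sum_univ_castSucc], rfl⟩
  · rintro ⟨⟨a, b⟩, f⟩ h
    simp only [Finset.mem_sigma, Finset.HasAntidiagonal.mem_antidiagonal,
      Finset.Nat.mem_antidiagonalTuple] at h ⊢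
    rw [Fin.sum_univ_castSucc]
    simp [h.2, h.1]
  · intro f h
    exact Fin.snoc_init_self f
  · rintro ⟨⟨a, b⟩, f⟩ h
    simp only [Finset.mem_sigma, Finset.HasAntidiagonal.mem_antidiagonal,
      Finset.Nat.mem_antidiagonalTuple] at h
    ext i
    · simp [h.2]
    · simp
    · simp
  · intro f h
    rw [Fin.prod_univ_castSucc]
    simp [Function.comp]

open PowerSeries in
lemma geom_inv {F : Type*} [CommRing F] (a : F) :
    (1 - PowerSeries.C a * PowerSeries.X) * PowerSeries.mk (fun s => a ^ s) = 1 := by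
  ext m
  rw [sub_mul, one_mul, mul_assoc]
  cases m with
  | zero => simp
  | succ m => simp [PowerSeries.coeff_succ_X_mul, pow_succ, mul_comm]

open PowerSeries in
lemma prod_mul_hsym {F : Type*} [CommRing F] : ∀ (n : ℕ) (x : Fin n → F),
    (∏ i, (1 - PowerSeries.C (x i) * PowerSeries.X)) * PowerSeries.mk (hsym n x) = 1 := by
  intro n
  induction n with
  | zero =>
    intro x
    have : PowerSeries.mk (hsym 0 x) = 1 := by
      ext m
      cases m <;> simp [hsym_zero_vars, PowerSeries.coeff_one]
    simp [this]
  | succ n ih =>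
    intro x
    have hmk : PowerSeries.mk (hsym (n+1) x)
        = PowerSeries.mk (hsym n (x ∘ Fin.castSucc)) * PowerSeries.mk (fun s => x (Fin.last n) ^ s) := by
      ext m
      rw [PowerSeries.coeff_mul]
      simp [hsym_succ]
    rw [hmk, Fin.prod_univ_castSucc]
    calc ((∏ i : Fin n, (1 - PowerSeries.C (x (Fin.castSucc i)) * PowerSeries.X)) *
            (1 - PowerSeries.C (x (Fin.last n)) * PowerSeries.X)) *
          (PowerSeries.mk (hsym n (x ∘ Fin.castSucc)) * PowerSeries.mk (fun s => x (Fin.last n) ^ s))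
        = ((∏ i : Fin n, (1 - PowerSeries.C (x (Fin.castSucc i)) * PowerSeries.X)) *
            PowerSeries.mk (hsym n (x ∘ Fin.castSucc))) *
          ((1 - PowerSeries.C (x (Fin.last n)) * PowerSeries.X) *
            PowerSeries.mk (fun s => x (Fin.last n) ^ s)) := by ring
      _ = 1 := by
        rw [show (∏ i : Fin n, (1 - PowerSeries.C (x (Fin.castSucc i)) * PowerSeries.X)) = ∏ i : Fin n, (1 - PowerSeries.C ((x ∘ Fin.castSucc) i) * PowerSeries.X) from rfl, ih (x ∘ Fin.castSucc), geom_inv, one_mul]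

open Polynomial in
lemma reflect_one_X_sub_C {F : Type*} [CommRing F] (a : F) :
    (X - C a).reflect 1 = 1 - C a * X := by
  ext n
  rw [coeff_reflect]
  match n with
  | 0 => simp [revAt_le]
  | 1 => simp [revAt_le, coeff_one]
  | (n+2) =>
    rw [Polynomial.revAt_eq_self_of_lt (by omega)]
    simp [coeff_X, coeff_one]

open Polynomial in
lemma reflect_prod_X_sub_C {F : Type*} [CommRing F] [Nontrivial F] {ι : Type*}
    [DecidableEq ι] (s : Finset ι) (v : ι → F) :
    (∏ i ∈ s, (X - C (v i))).reflect s.card = ∏ i ∈ s, (1 - C (v i) * X) := by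
  induction s using Finset.induction with
  | empty => simp
  | @insert a s ha ih =>
    rw [Finset.prod_insert ha, Finset.prod_insert ha, Finset.card_insert_of_notMem ha,
      add_comm s.card 1, reflect_mul (X - C (v a)) _ (by simp [natDegree_X_sub_C])
        (le_trans (natDegree_prod_le _ _) (by
          calc ∑ i ∈ s, (X - C (v i)).natDegree ≤ ∑ _i ∈ s, 1 :=
              Finset.sum_le_sum (f := fun i => (X - C (v i)).natDegree) (g := fun _ => 1) (fun i _ => by simp [natDegree_X_sub_C])
            _ = s.card := by simp)),
      reflect_one_X_sub_C, ih]

open Polynomial in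
theorem stmt_10 {F : Type*} [Field F] (k : ℕ) (hk : 1 ≤ k) (α : Fin k → F)
    (hα : Function.Injective α) (t r : ℕ) (hr : r ≤ k - 1)
    (g : Polynomial F) (hg : g = ∏ j, (X - C (α j)))
    (c : ℕ → F) (hc : ∀ j, j ≤ k → c j = g.coeff (k - j))
    (hc' : ∀ j, k < j → c j = 0)
    (e : ℕ → F) (he : ∀ s, e s = hsym k α s) :
    ((X : Polynomial F) ^ (k + t) %ₘ g).coeff r
      = -∑ i ∈ Finset.range (t + 1), c (k - r + i) * e (t - i) := by
  have hgmonic : g.Monic := by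
    rw [hg]; exact monic_prod_of_monic _ _ (fun j _ => monic_X_sub_C _)
  have hgnat : g.natDegree = k := by
    rw [hg, natDegree_prod_of_monic _ _ (fun j _ => monic_X_sub_C _)]
    simp
  have hgdeg : g.degree = (k : ℕ) := by
    rw [degree_eq_natDegree hgmonic.ne_zero, hgnat]
  -- coefficients of the reversed polynomial
  have hGcoeff : ∀ j, (∏ i, (1 - C (α i) * X) : F[X]).coeff j = c j := by
    intro j
    have hP : (∏ i, (1 - C (α i) * X) : F[X]) = g.reflect k := by
      rw [hg, ← reflect_prod_X_sub_C]
      congr 1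
      simp
    rw [hP, coeff_reflect]
    rcases le_or_gt j k with hj | hj
    · rw [revAt_le hj, hc j hj]
    · rw [revAt_eq_self_of_lt hj, hc' j hj,
        coeff_eq_zero_of_natDegree_lt (by omega)]
  -- the key symmetric-function identity
  have key : ∀ m, 1 ≤ m → ∑ j ∈ Finset.range (m + 1), c j * e (m - j) = 0 := by
    intro m hm
    have h1 := prod_mul_hsym k α
    have h2 : ((∏ i, (1 - C (α i) * X) : Polynomial F) : PowerSeries F)
        = ∏ i, (1 - PowerSeries.C (α i) * PowerSeries.X) := by
      rw [← Polynomial.coeToPowerSeries.ringHom_apply, map_prod]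
      simp
    rw [← h2] at h1
    have h3 := congrArg (PowerSeries.coeff m) h1
    rw [PowerSeries.coeff_mul, Finset.Nat.sum_antidiagonal_eq_sum_range_succ_mk] at h3
    simp only [Polynomial.coeff_coe, PowerSeries.coeff_mk, hGcoeff] at h3
    rw [PowerSeries.coeff_one, if_neg (by omega)] at h3
    simp_rw [← he] at h3
    exact h3
  have hc0 : c 0 = 1 := by
    rw [hc 0 (by omega), Nat.sub_zero, ← hgnat]
    exact hgmonic.coeff_natDegree
  suffices H : ∀ t r, r < k → ((X : Polynomial F) ^ (k + t) %ₘ g).coeff r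
      = -∑ i ∈ Finset.range (t + 1), c (k - r + i) * e (t - i) by
    exact H t r (by omega)
  clear hr t r
  intro t
  induction t with
  | zero =>
    intro r hrk
    have hXk : (X : F[X]) ^ (k + 0) %ₘ g = X ^ k - g := by
      have e1 : (X : F[X]) ^ (k + 0) = (X ^ k - g) + g := by rw [Nat.add_zero]; ring
      have hd : (X ^ k - g : F[X]).degree < g.degree := by
        have := degree_sub_lt (p := (X : F[X]) ^ k) (q := g)
          (by rw [degree_X_pow, hgdeg]) (by exact pow_ne_zero _ X_ne_zero)
          (by rw [leadingCoeff_X_pow, hgmonic.leadingCoeff])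
        rw [degree_X_pow, ← hgdeg] at this
        exact this
      rw [e1, add_modByMonic, (modByMonic_eq_self_iff hgmonic).2 hd,
        (modByMonic_eq_zero_iff_dvd hgmonic).2 dvd_rfl, add_zero]
    rw [hXk, coeff_sub, coeff_X_pow, if_neg (by omega), Finset.sum_range_one]
    have he0 : e 0 = 1 := by rw [he, hsym_zero]
    have hcr : c (k - r) = g.coeff r := by
      rw [hc (k - r) (Nat.sub_le _ _), Nat.sub_sub_self (by omega)]
    simp [he0, Nat.add_zero, hcr]
  | succ t ih =>
    intro r hrk
    set Ft := (X : F[X]) ^ (k + t) %ₘ g with hFt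
    have hdFt : Ft.degree < g.degree := degree_modByMonic_lt _ hgmonic
    have hcoeffFt : ∀ m, k ≤ m → Ft.coeff m = 0 := by
      intro m hm
      apply coeff_eq_zero_of_degree_lt
      refine lt_of_lt_of_le (lt_of_lt_of_le hdFt (le_of_eq hgdeg)) ?_
      exact_mod_cast hm
    have hgk : g.coeff k = 1 := by rw [← hgnat]; exact hgmonic.coeff_natDegree
    have hstep : (X : F[X]) ^ (k + (t + 1)) %ₘ g
        = X * Ft - C (Ft.coeff (k - 1)) * g := by
      have hmd := modByMonic_add_div ((X : F[X]) ^ (k + t)) g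
      rw [← hFt] at hmd
      have e2 : (X : F[X]) ^ (k + (t + 1))
          = (X * Ft - C (Ft.coeff (k - 1)) * g)
            + g * (X * ((X : F[X]) ^ (k + t) /ₘ g) + C (Ft.coeff (k - 1))) := by
        rw [show k + (t + 1) = (k + t) + 1 from rfl, pow_succ, mul_comm]
        linear_combination (- X) * hmd
      rw [e2, add_modByMonic,
        (modByMonic_eq_zero_iff_dvd hgmonic).2 (Dvd.intro _ rfl), add_zero]
      apply (modByMonic_eq_self_iff hgmonic).2
      rw [hgdeg]
      rw [degree_lt_iff_coeff_zero]
      intro m hm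
      have hm' : k ≤ m := by exact_mod_cast hm
      obtain ⟨m', rfl⟩ : ∃ m', m = m' + 1 := ⟨m - 1, by omega⟩
      rw [coeff_sub, coeff_X_mul, coeff_C_mul]
      rcases eq_or_lt_of_le hm' with hmk | hmk
      · rw [← hmk, hgk, show m' = k - 1 by omega]
        ring
      · have h1 : Ft.coeff m' = 0 := hcoeffFt m' (by omega)
        have h2 : g.coeff (m' + 1) = 0 :=
          coeff_eq_zero_of_natDegree_lt (by rw [hgnat]; omega)
        rw [h1, h2]
        ring
    have hb := ih (k - 1) (by omega)
    rw [show k - (k - 1) = 1 from by omega] at hb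
    have hkey := key (t + 1) (by omega)
    rw [Finset.sum_range_succ'] at hkey
    simp only [Nat.succ_sub_succ, Nat.sub_zero, hc0, one_mul] at hkey
    -- hkey : ∑ i ∈ range (t+1), c (i+1) * e (t-i) + e (t+1) = 0
    have hbb : Ft.coeff (k - 1) = -∑ i ∈ Finset.range (t + 1), c (i + 1) * e (t - i) := by
      rw [hb]; congr 1; exact Finset.sum_congr rfl (fun i _ => by rw [Nat.add_comm 1 i])
    rw [hstep, coeff_sub, coeff_C_mul]
    match r with
    | 0 =>
      have hzero : ((X : F[X]) * Ft).coeff 0 = 0 := by simp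
      have hgc0 : g.coeff 0 = c k := by rw [hc k le_rfl, Nat.sub_self]
      have hsplit : ∑ i ∈ Finset.range (t + 1 + 1), c (k - 0 + i) * e (t + 1 - i)
          = (∑ i ∈ Finset.range (t + 1), c (k - 0 + (i + 1)) * e (t + 1 - (i + 1)))
            + c (k - 0 + 0) * e (t + 1 - 0) := Finset.sum_range_succ' _ _
      have hzsum : ∑ i ∈ Finset.range (t + 1), c (k - 0 + (i + 1)) * e (t + 1 - (i + 1)) = 0 :=
        Finset.sum_eq_zero (fun i _ => by rw [hc' (k - 0 + (i + 1)) (by omega)]; ring)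
      rw [hzero, hgc0, hbb, hsplit, hzsum,
        show k - 0 + 0 = k from by omega, show t + 1 - 0 = t + 1 from rfl]
      linear_combination (c k) * hkey
    | r' + 1 =>
      rw [coeff_X_mul]
      have ha := ih r' (by omega)
      have hgcr : g.coeff (r' + 1) = c (k - (r' + 1)) := by
        rw [hc (k - (r' + 1)) (Nat.sub_le _ _), Nat.sub_sub_self (by omega)]
      have hsplit : ∑ i ∈ Finset.range (t + 1 + 1), c (k - (r' + 1) + i) * e (t + 1 - i)
          = (∑ i ∈ Finset.range (t + 1), c (k - (r' + 1) + (i + 1)) * e (t + 1 - (i + 1)))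
            + c (k - (r' + 1) + 0) * e (t + 1 - 0) := Finset.sum_range_succ' _ _
      have hs2 : ∑ i ∈ Finset.range (t + 1), c (k - (r' + 1) + (i + 1)) * e (t + 1 - (i + 1))
          = ∑ i ∈ Finset.range (t + 1), c (k - r' + i) * e (t - i) :=
        Finset.sum_congr rfl (fun i _ => by
          rw [show k - (r' + 1) + (i + 1) = k - r' + i from by omega,
            show t + 1 - (i + 1) = t - i from by omega])
      rw [ha, hgcr, hbb, hsplit, hs2,
        show k - (r' + 1) + 0 = k - (r' + 1) from by omega, show t + 1 - 0 = t + 1 from rfl]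
      linear_combination (c (k - (r' + 1))) * hkey
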